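/- There exists a nonnegative real matrix whose nonnegative rank is strictly larger than its rank; e.g., the 4×4 matrix X with rows (1,1,0,0), (1,0,1,0), (0,1,0,1), (0,0,1,1) satisfies rank(X) = 3 but X cannot be written as a sum of 3 entrywise nonnegative rank-one matrices (its nonnegative rank is 4). -/

import Mathlib

def exampleMatrix : Matrix (Fin 4) (Fin 4) ℝ :=
  !![1, 1, 0, 0;
     1, 0, 1, 0;
     0, 1, 0, 1;
     0, 0, 1, 1]

set_option synthInstance.maxSize 2000 in
set_option maxHeartbeats 1000000 in
lemma keyColoring : ∀ a0 a1 a2 a3 a4 a5 a6 a7 : Fin 3,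
    ¬(a0 ≠ a3 ∧ a4 ≠ a0 ∧ a0 ≠ a5 ∧ a0 ≠ a6 ∧ a0 ≠ a7 ∧
      a2 ≠ a1 ∧ a1 ≠ a3 ∧ a1 ≠ a5 ∧ a1 ≠ a6 ∧ a1 ≠ a7 ∧
      a2 ≠ a4 ∧ a2 ≠ a5 ∧ a6 ≠ a2 ∧ a2 ≠ a7 ∧
      a3 ≠ a4 ∧ a3 ≠ a5 ∧ a3 ≠ a7 ∧
      a4 ≠ a6 ∧ a7 ≠ a4 ∧ a5 ≠ a6) := by decide

lemma rank_eq_three : exampleMatrix.rank = 3 := by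
  have hub : exampleMatrix.rank ≤ 3 := by
    have hfac : exampleMatrix =
        (!![1,1,0;1,0,1;0,1,0;0,0,1] : Matrix (Fin 4) (Fin 3) ℝ) *
        (!![1,0,0,-1;0,1,0,1;0,0,1,1] : Matrix (Fin 3) (Fin 4) ℝ) := by
      ext i j
      fin_cases i <;> fin_cases j <;>
        norm_num [exampleMatrix, Matrix.mul_apply, Fin.sum_univ_succ,
          Matrix.vecHead, Matrix.vecTail]
    calc exampleMatrix.rank
        ≤ (!![1,1,0;1,0,1;0,1,0;0,0,1] : Matrix (Fin 4) (Fin 3) ℝ).rank := by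
          rw [hfac]; exact Matrix.rank_mul_le_left _ _
      _ ≤ 3 := by simpa using Matrix.rank_le_width _
  have hlb : 3 ≤ exampleMatrix.rank := by
    have hfac : (!![1,1,0;1,0,1;0,1,0] : Matrix (Fin 3) (Fin 3) ℝ) =
        (!![1,0,0,0;0,1,0,0;0,0,1,0] : Matrix (Fin 3) (Fin 4) ℝ) *
        (exampleMatrix * (!![1,0,0;0,1,0;0,0,1;0,0,0] : Matrix (Fin 4) (Fin 3) ℝ)) := by
      ext i j
      fin_cases i <;> fin_cases j <;>
        norm_num [exampleMatrix, Matrix.mul_apply, Fin.sum_univ_succ,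
          Matrix.vecHead, Matrix.vecTail, Matrix.cons_val_two, Matrix.cons_val_three]
    have h1 : (!![1,1,0;1,0,1;0,1,0] : Matrix (Fin 3) (Fin 3) ℝ).rank = 3 := by
      have : IsUnit (!![1,1,0;1,0,1;0,1,0] : Matrix (Fin 3) (Fin 3) ℝ) := by
        rw [Matrix.isUnit_iff_isUnit_det, isUnit_iff_ne_zero]
        norm_num [Matrix.det_fin_three, Matrix.cons_val_two, Matrix.vecHead, Matrix.vecTail]
      simpa using Matrix.rank_of_isUnit _ this
    calc (3:ℕ) = (!![1,1,0;1,0,1;0,1,0] : Matrix (Fin 3) (Fin 3) ℝ).rank := h1.symm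
      _ ≤ (exampleMatrix * (!![1,0,0;0,1,0;0,0,1;0,0,0] : Matrix (Fin 4) (Fin 3) ℝ)).rank := by
          rw [hfac]; exact Matrix.rank_mul_le_right _ _
      _ ≤ exampleMatrix.rank := Matrix.rank_mul_le_left _ _
  omega

/-- There is a nonnegative matrix whose nonnegative rank exceeds its rank: the 4×4 matrix
with rows `(1,1,0,0)`, `(1,0,1,0)`, `(0,1,0,1)`, `(0,0,1,1)` is entrywise nonnegative, has
rank 3, cannot be written as a sum of 3 entrywise nonnegative rank-one matrices, but can be
written as a sum of 4 such matrices (so its nonnegative rank is 4 > 3). -/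
theorem nonneg_rank_gt_rank_example :
    (∀ i j, 0 ≤ exampleMatrix i j) ∧
    exampleMatrix.rank = 3 ∧
    (¬ ∃ (u v : Fin 3 → Fin 4 → ℝ),
      (∀ i j, 0 ≤ u i j) ∧ (∀ i j, 0 ≤ v i j) ∧
      ∀ a b, exampleMatrix a b = ∑ i, u i a * v i b) ∧
    (∃ (u v : Fin 4 → Fin 4 → ℝ),
      (∀ i j, 0 ≤ u i j) ∧ (∀ i j, 0 ≤ v i j) ∧
      ∀ a b, exampleMatrix a b = ∑ i, u i a * v i b) := by
  refine ⟨?_, rank_eq_three, ?_, ?_⟩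
  · intro i j
    fin_cases i <;> fin_cases j <;> norm_num [exampleMatrix, Matrix.vecHead, Matrix.vecTail]
  · rintro ⟨u, v, hu, hv, h⟩
    -- a single term is at most the whole (nonnegative) sum
    have hpos : ∀ (a b : Fin 4) (i : Fin 3), 0 < u i a → 0 < v i b →
        0 < exampleMatrix a b := by
      intro a b i h1 h2
      rw [h]
      exact lt_of_lt_of_le (mul_pos h1 h2)
        (Finset.single_le_sum (fun j _ => mul_nonneg (hu j a) (hv j b)) (Finset.mem_univ i))
    -- a positive entry must receive a positive term
    have hch : ∀ a b : Fin 4, 0 < exampleMatrix a b → ∃ i, 0 < u i a ∧ 0 < v i b := by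
      intro a b hab
      by_contra hc
      push_neg at hc
      have hz : ∀ i, u i a * v i b = 0 := by
        intro i
        rcases (hu i a).lt_or_eq with h1 | h1
        · rw [le_antisymm (hc i h1) (hv i b), mul_zero]
        · rw [← h1, zero_mul]
      rw [h] at hab
      simp [hz] at hab
    -- choose a covering index for each of the 8 positive entries
    obtain ⟨i0, hu0, hv0⟩ := hch 0 0 (by norm_num [exampleMatrix, Matrix.vecHead, Matrix.vecTail])
    obtain ⟨i1, hu1, hv1⟩ := hch 0 1 (by norm_num [exampleMatrix, Matrix.vecHead, Matrix.vecTail])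
    obtain ⟨i2, hu2, hv2⟩ := hch 1 0 (by norm_num [exampleMatrix, Matrix.vecHead, Matrix.vecTail])
    obtain ⟨i3, hu3, hv3⟩ := hch 1 2 (by norm_num [exampleMatrix, Matrix.vecHead, Matrix.vecTail, Matrix.cons_val_two, Matrix.cons_val_three])
    obtain ⟨i4, hu4, hv4⟩ := hch 2 1 (by norm_num [exampleMatrix, Matrix.vecHead, Matrix.vecTail, Matrix.cons_val_two, Matrix.cons_val_three])
    obtain ⟨i5, hu5, hv5⟩ := hch 2 3 (by norm_num [exampleMatrix, Matrix.vecHead, Matrix.vecTail, Matrix.cons_val_two, Matrix.cons_val_three])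
    obtain ⟨i6, hu6, hv6⟩ := hch 3 2 (by norm_num [exampleMatrix, Matrix.vecHead, Matrix.vecTail, Matrix.cons_val_two, Matrix.cons_val_three])
    obtain ⟨i7, hu7, hv7⟩ := hch 3 3 (by norm_num [exampleMatrix, Matrix.vecHead, Matrix.vecTail, Matrix.cons_val_two, Matrix.cons_val_three])
    -- two positions in distinct rows/columns with a zero cross entry get distinct indices
    have mk : ∀ (a b : Fin 4) (i j : Fin 3), exampleMatrix a b = 0 →
        0 < u i a → 0 < v j b → i ≠ j := by
      intro a b i j hzab h1 h2 e
      subst e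
      have := hpos a b i h1 h2
      rw [hzab] at this
      exact lt_irrefl 0 this
    have z02 : exampleMatrix 0 2 = 0 := by norm_num [exampleMatrix, Matrix.vecHead, Matrix.vecTail, Matrix.cons_val_two, Matrix.cons_val_three]
    have z03 : exampleMatrix 0 3 = 0 := by norm_num [exampleMatrix, Matrix.vecHead, Matrix.vecTail, Matrix.cons_val_two, Matrix.cons_val_three]
    have z11 : exampleMatrix 1 1 = 0 := by norm_num [exampleMatrix, Matrix.vecHead, Matrix.vecTail, Matrix.cons_val_two, Matrix.cons_val_three]
    have z13 : exampleMatrix 1 3 = 0 := by norm_num [exampleMatrix, Matrix.vecHead, Matrix.vecTail, Matrix.cons_val_two, Matrix.cons_val_three]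
    have z20 : exampleMatrix 2 0 = 0 := by norm_num [exampleMatrix, Matrix.vecHead, Matrix.vecTail, Matrix.cons_val_two, Matrix.cons_val_three]
    have z22 : exampleMatrix 2 2 = 0 := by norm_num [exampleMatrix, Matrix.vecHead, Matrix.vecTail, Matrix.cons_val_two, Matrix.cons_val_three]
    have z30 : exampleMatrix 3 0 = 0 := by norm_num [exampleMatrix, Matrix.vecHead, Matrix.vecTail, Matrix.cons_val_two, Matrix.cons_val_three]
    have z31 : exampleMatrix 3 1 = 0 := by norm_num [exampleMatrix, Matrix.vecHead, Matrix.vecTail, Matrix.cons_val_two, Matrix.cons_val_three]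
    have n03 : i0 ≠ i3 := mk 0 2 i0 i3 z02 hu0 hv3
    have n04 : i4 ≠ i0 := mk 2 0 i4 i0 z20 hu4 hv0
    have n05 : i0 ≠ i5 := mk 0 3 i0 i5 z03 hu0 hv5
    have n06 : i0 ≠ i6 := mk 0 2 i0 i6 z02 hu0 hv6
    have n07 : i0 ≠ i7 := mk 0 3 i0 i7 z03 hu0 hv7
    have n12 : i2 ≠ i1 := mk 1 1 i2 i1 z11 hu2 hv1
    have n13 : i1 ≠ i3 := mk 0 2 i1 i3 z02 hu1 hv3
    have n15 : i1 ≠ i5 := mk 0 3 i1 i5 z03 hu1 hv5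
    have n16 : i1 ≠ i6 := mk 0 2 i1 i6 z02 hu1 hv6
    have n17 : i1 ≠ i7 := mk 0 3 i1 i7 z03 hu1 hv7
    have n24 : i2 ≠ i4 := mk 1 1 i2 i4 z11 hu2 hv4
    have n25 : i2 ≠ i5 := mk 1 3 i2 i5 z13 hu2 hv5
    have n26 : i6 ≠ i2 := mk 3 0 i6 i2 z30 hu6 hv2
    have n27 : i2 ≠ i7 := mk 1 3 i2 i7 z13 hu2 hv7
    have n34 : i3 ≠ i4 := mk 1 1 i3 i4 z11 hu3 hv4
    have n35 : i3 ≠ i5 := mk 1 3 i3 i5 z13 hu3 hv5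
    have n37 : i3 ≠ i7 := mk 1 3 i3 i7 z13 hu3 hv7
    have n46 : i4 ≠ i6 := mk 2 2 i4 i6 z22 hu4 hv6
    have n47 : i7 ≠ i4 := mk 3 1 i7 i4 z31 hu7 hv4
    have n56 : i5 ≠ i6 := mk 2 2 i5 i6 z22 hu5 hv6
    exact keyColoring i0 i1 i2 i3 i4 i5 i6 i7 ⟨n03, n04, n05, n06, n07, n12, n13, n15, n16, n17,
      n24, n25, n26, n27, n34, n35, n37, n46, n47, n56⟩
  · refine ⟨fun i a => if a = i then 1 else 0, fun i b => exampleMatrix i b, ?_, ?_, ?_⟩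
    · intro i j; dsimp only; split <;> norm_num
    · intro i j; fin_cases i <;> fin_cases j <;> norm_num [exampleMatrix, Matrix.vecHead, Matrix.vecTail]
    · intro a b
      simp [ite_mul, Finset.sum_ite_eq]
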